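/- Let α > 0 and c₁, C₁ > 0. There exist constants c, C > 0 depending only on α, c₁, C₁ such that the following holds. Let 0 < δ ≤ 1 and let ξ₁, ξ₂, η₁, η₂ ∈ ℝ satisfy: 1/8 ≤ |ξ₁| ≤ 8, 1/8 ≤ |ξ₁+ξ₂| ≤ 8, δ/8 ≤ |ξ₂| ≤ 8δ, c₁ ≤ |η₁/ξ₁ - η₂/ξ₂| ≤ C₁, and the resonance condition c₁ |(η₁ξ₂ - η₂ξ₁)²/(ξ₁ξ₂(ξ₁+ξ₂))| ≤ |(α+1)(|ξ₁|^α ξ₁ + |ξ₂|^α ξ₂ - |ξ₁+ξ₂|^α(ξ₁+ξ₂))| ≤ C₁ |(η₁ξ₂ - η₂ξ₁)²/(ξ₁ξ₂(ξ₁+ξ₂))|. Then the determinant B = det [[ (α+1)|ξ₁|^α - η₁²/ξ₁², (α+1)|ξ₂|^α - η₂²/ξ₂², (α+1)|ξ₁+ξ₂|^α - (η₁+η₂)²/(ξ₁+ξ₂)² ], [ 2η₁/ξ₁, 2η₂/ξ₂, 2(η₁+η₂)/(ξ₁+ξ₂) ], [ 1, 1, 1 ]] satisfies c δ ≤ |B|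 ≤ C δ. -/

import Mathlib

set_option maxHeartbeats 1000000


/-- Dispersive part `(α+1)(|ξ₁|^α ξ₁ + |ξ₂|^α ξ₂ - |ξ₁+ξ₂|^α(ξ₁+ξ₂))`. -/
noncomputable def dispPart (α ξ₁ ξ₂ : ℝ) : ℝ :=
  (α + 1) * (|ξ₁| ^ α * ξ₁ + |ξ₂| ^ α * ξ₂ - |ξ₁ + ξ₂| ^ α * (ξ₁ + ξ₂))

/-- Transverse part `(η₁ξ₂ - η₂ξ₁)²/(ξ₁ξ₂(ξ₁+ξ₂))`. -/
noncomputable def transPart (ξ₁ ξ₂ η₁ η₂ : ℝ) : ℝ :=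
  (η₁ * ξ₂ - η₂ * ξ₁) ^ 2 / (ξ₁ * ξ₂ * (ξ₁ + ξ₂))

/-- Determinant of the matrix of (unnormalized) normals to the characteristic surface at
`(ξ₁,η₁)`, `(ξ₂,η₂)`, `(ξ₁+ξ₂,η₁+η₂)`. -/
noncomputable def detB (α ξ₁ ξ₂ η₁ η₂ : ℝ) : ℝ :=
  Matrix.det
    !![(α + 1) * |ξ₁| ^ α - η₁ ^ 2 / ξ₁ ^ 2,
         (α + 1) * |ξ₂| ^ α - η₂ ^ 2 / ξ₂ ^ 2,
         (α + 1) * |ξ₁ + ξ₂| ^ α - (η₁ + η₂) ^ 2 / (ξ₁ + ξ₂) ^ 2;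
       2 * η₁ / ξ₁, 2 * η₂ / ξ₂, 2 * (η₁ + η₂) / (ξ₁ + ξ₂);
       1, 1, 1]

/-- Superadditivity of `x ↦ |x|^α x = x^(α+1)` on the nonnegative reals. -/
lemma stmt18_superadd {α : ℝ} (hα : 0 ≤ α) {a b : ℝ} (ha : 0 ≤ a) (hb : 0 ≤ b) :
    |a| ^ α * a + |b| ^ α * b ≤ |a + b| ^ α * (a + b) := by
  rw [abs_of_nonneg ha, abs_of_nonneg hb, abs_of_nonneg (by linarith)]
  have h1 : a ^ α * a ≤ (a + b) ^ α * a :=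
    mul_le_mul_of_nonneg_right (Real.rpow_le_rpow ha (by linarith) hα) ha
  have h2 : b ^ α * b ≤ (a + b) ^ α * b :=
    mul_le_mul_of_nonneg_right (Real.rpow_le_rpow hb (by linarith) hα) hb
  have := mul_add ((a + b) ^ α) a b
  linarith

/-- The resonance function `φ(x)+φ(y)-φ(x+y)` with `φ(x)=|x|^α x` always has sign
opposite to `x·y·(x+y)`. -/
lemma stmt18_key {α : ℝ} (hα : 0 ≤ α) (x y : ℝ) :
    (|x| ^ α * x + |y| ^ α * y - |x + y| ^ α * (x + y)) * (x * y * (x + y)) ≤ 0 := by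
  rcases le_total 0 x with hx | hx <;> rcases le_total 0 y with hy | hy
  · have h := stmt18_superadd hα hx hy
    have h2 : 0 ≤ x * y * (x + y) := by positivity
    nlinarith
  · rcases le_total 0 (x + y) with hxy | hxy
    · have h := stmt18_superadd hα hxy (neg_nonneg.mpr hy)
      rw [show x + y + -y = x by ring] at h
      rw [abs_neg] at h
      have h2 : x * y * (x + y) ≤ 0 := by
        have : x * y ≤ 0 := mul_nonpos_of_nonneg_of_nonpos hx hy
        exact mul_nonpos_of_nonpos_of_nonneg this hxy
      nlinarith
    · have h := stmt18_superadd hα hx (neg_nonneg.mpr hxy)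
      rw [show x + -(x + y) = -y by ring] at h
      rw [abs_neg, abs_neg] at h
      have h2 : 0 ≤ x * y * (x + y) := by
        have : 0 ≤ y * (x + y) := by nlinarith
        calc (0:ℝ) ≤ x * (y * (x + y)) := mul_nonneg hx this
        _ = x * y * (x + y) := by ring
      nlinarith
  · rcases le_total 0 (x + y) with hxy | hxy
    · have h := stmt18_superadd hα hxy (neg_nonneg.mpr hx)
      rw [show x + y + -x = y by ring] at h
      rw [abs_neg] at h
      have h2 : x * y * (x + y) ≤ 0 := by
        have : x * y ≤ 0 := mul_nonpos_of_nonpos_of_nonneg hx hy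
        exact mul_nonpos_of_nonpos_of_nonneg this hxy
      nlinarith
    · have h := stmt18_superadd hα hy (neg_nonneg.mpr hxy)
      rw [show y + -(x + y) = -x by ring] at h
      rw [abs_neg, abs_neg] at h
      have h2 : 0 ≤ x * y * (x + y) := by
        have : 0 ≤ x * (x + y) := by nlinarith
        calc (0:ℝ) ≤ y * (x * (x + y)) := mul_nonneg hy this
        _ = x * y * (x + y) := by ring
      nlinarith
  · have h := stmt18_superadd hα (neg_nonneg.mpr hx) (neg_nonneg.mpr hy)
    rw [show -x + -y = -(x + y) by ring] at h
    rw [abs_neg, abs_neg, abs_neg] at h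
    have h2 : x * y * (x + y) ≤ 0 := by
      have : 0 ≤ x * y := by nlinarith
      exact mul_nonpos_of_nonneg_of_nonpos this (by linarith)
    nlinarith

/-- Factorization of the determinant of normals. -/
lemma stmt18_detB_eq {α ξ₁ ξ₂ η₁ η₂ : ℝ} (h1 : ξ₁ ≠ 0) (h2 : ξ₂ ≠ 0) (h3 : ξ₁ + ξ₂ ≠ 0) :
    detB α ξ₁ ξ₂ η₁ η₂ * (ξ₁ + ξ₂) =
      -2 * (η₁ / ξ₁ - η₂ / ξ₂) * (dispPart α ξ₁ ξ₂ - transPart ξ₁ ξ₂ η₁ η₂) := by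
  unfold detB dispPart transPart
  rw [Matrix.det_fin_three]
  simp [Matrix.cons_val_zero, Matrix.cons_val_one]
  field_simp
  ring

lemma stmt18_trans_eq {ξ₁ ξ₂ η₁ η₂ : ℝ} (h1 : ξ₁ ≠ 0) (h2 : ξ₂ ≠ 0) (h3 : ξ₁ + ξ₂ ≠ 0) :
    transPart ξ₁ ξ₂ η₁ η₂ * (ξ₁ + ξ₂) = ξ₁ * ξ₂ * (η₁ / ξ₁ - η₂ / ξ₂) ^ 2 := by
  unfold transPart
  field_simp

/-- under the rescaled frequency localization, group velocity separation,
and the resonant balance between dispersive and transverse parts, the determinant of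
normals is comparable to `δ = N_min/N_max`. -/
theorem statement18 (α c₁ C₁ : ℝ) (hα : 0 < α) (hc₁ : 0 < c₁) (hC₁ : 0 < C₁) :
    ∃ c C : ℝ, 0 < c ∧ 0 < C ∧
      ∀ δ ξ₁ ξ₂ η₁ η₂ : ℝ, 0 < δ → δ ≤ 1 →
        1 / 8 ≤ |ξ₁| → |ξ₁| ≤ 8 →
        1 / 8 ≤ |ξ₁ + ξ₂| → |ξ₁ + ξ₂| ≤ 8 →
        δ / 8 ≤ |ξ₂| → |ξ₂| ≤ 8 * δ →
        c₁ ≤ |η₁ / ξ₁ - η₂ / ξ₂| → |η₁ / ξ₁ - η₂ / ξ₂| ≤ C₁ →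
        c₁ * |transPart ξ₁ ξ₂ η₁ η₂| ≤ |dispPart α ξ₁ ξ₂| →
        |dispPart α ξ₁ ξ₂| ≤ C₁ * |transPart ξ₁ ξ₂ η₁ η₂| →
        c * δ ≤ |detB α ξ₁ ξ₂ η₁ η₂| ∧ |detB α ξ₁ ξ₂ η₁ η₂| ≤ C * δ := by
  refine ⟨c₁ ^ 3 / 2048, 8192 * C₁ ^ 3 * (1 + C₁), by positivity, by positivity, ?_⟩
  intro δ ξ₁ ξ₂ η₁ η₂ hδ hδ1 ha1 ha2 hb1 hb2 hc1 hc2 hw1 hw2 hr1 hr2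
  have h1 : ξ₁ ≠ 0 := by
    intro h; rw [h] at ha1; simp at ha1; linarith
  have h2 : ξ₂ ≠ 0 := by
    intro h; rw [h] at hc1; simp at hc1; linarith
  have h3 : ξ₁ + ξ₂ ≠ 0 := by
    intro h; rw [h] at hb1; simp at hb1; linarith
  set w : ℝ := η₁ / ξ₁ - η₂ / ξ₂ with hw
  set d : ℝ := dispPart α ξ₁ ξ₂ with hd
  set t : ℝ := transPart ξ₁ ξ₂ η₁ η₂ with ht
  set B : ℝ := detB α ξ₁ ξ₂ η₁ η₂ with hB
  -- sign: d * t ≤ 0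
  have hsign : d * t ≤ 0 := by
    have e : d * t = ((α + 1) * (η₁ * ξ₂ - η₂ * ξ₁) ^ 2 *
        ((|ξ₁| ^ α * ξ₁ + |ξ₂| ^ α * ξ₂ - |ξ₁ + ξ₂| ^ α * (ξ₁ + ξ₂)) *
          (ξ₁ * ξ₂ * (ξ₁ + ξ₂)))) / (ξ₁ * ξ₂ * (ξ₁ + ξ₂)) ^ 2 := by
      rw [hd, ht]; unfold dispPart transPart
      field_simp
    rw [e]
    apply div_nonpos_of_nonpos_of_nonneg _ (by positivity)
    have hk := stmt18_key hα.le ξ₁ ξ₂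
    exact mul_nonpos_of_nonneg_of_nonpos (by positivity) hk
  -- |t| ≤ |d - t|
  have hPlow : |t| ≤ |d - t| := by
    rcases mul_nonpos_iff.mp hsign with ⟨hd', ht'⟩ | ⟨hd', ht'⟩
    · rw [abs_of_nonpos ht']
      exact le_trans (by linarith) (le_abs_self (d - t))
    · rw [abs_of_nonneg ht']
      have : -(d - t) ≤ |d - t| := neg_le_abs _
      linarith
  have hPhigh : |d - t| ≤ |d| + |t| := abs_sub d t
  -- key equations in absolute values
  have e1 : |B| * |ξ₁ + ξ₂| = 2 * |w| * |d - t| := by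
    have hid := stmt18_detB_eq (α := α) (η₁ := η₁) (η₂ := η₂) h1 h2 h3
    calc |B| * |ξ₁ + ξ₂| = |B * (ξ₁ + ξ₂)| := (abs_mul _ _).symm
      _ = |(-2 : ℝ) * w * (d - t)| := by rw [hid]
      _ = 2 * |w| * |d - t| := by
          rw [abs_mul, abs_mul]; norm_num
  have e2 : |t| * |ξ₁ + ξ₂| = |ξ₁| * |ξ₂| * |w| ^ 2 := by
    have hid := stmt18_trans_eq (η₁ := η₁) (η₂ := η₂) h1 h2 h3
    calc |t| * |ξ₁ + ξ₂| = |t * (ξ₁ + ξ₂)| := (abs_mul _ _).symm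
      _ = |ξ₁ * ξ₂ * w ^ 2| := by rw [hid]
      _ = |ξ₁| * |ξ₂| * |w| ^ 2 := by
          rw [abs_mul, abs_mul, abs_pow]
  have hw0 : (0 : ℝ) ≤ |w| := abs_nonneg _
  have htabs : (0 : ℝ) ≤ |t| := abs_nonneg _
  have hBabs : (0 : ℝ) ≤ |B| := abs_nonneg _
  -- bounds on |t|
  have htlow : c₁ ^ 2 * δ / 512 ≤ |t| := by
    have hww : c₁ ^ 2 ≤ |w| ^ 2 := by nlinarith
    have p1 : (1 / 8 : ℝ) * (δ / 8) ≤ |ξ₁| * |ξ₂| :=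
      mul_le_mul ha1 hc1 (by positivity) (abs_nonneg _)
    have p2 : (1 / 8 : ℝ) * (δ / 8) * c₁ ^ 2 ≤ |ξ₁| * |ξ₂| * |w| ^ 2 :=
      mul_le_mul p1 hww (by positivity) (by positivity)
    nlinarith [mul_nonneg htabs (by linarith : (0:ℝ) ≤ 8 - |ξ₁ + ξ₂|)]
  have hthigh : |t| ≤ 512 * C₁ ^ 2 * δ := by
    have hww2 : |w| ^ 2 ≤ C₁ ^ 2 := by nlinarith
    have p1 : |ξ₁| * |ξ₂| ≤ 8 * (8 * δ) :=
      mul_le_mul ha2 hc2 (abs_nonneg _) (by norm_num)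
    have p2 : |ξ₁| * |ξ₂| * |w| ^ 2 ≤ 8 * (8 * δ) * C₁ ^ 2 :=
      mul_le_mul p1 hww2 (by positivity) (by positivity)
    nlinarith [mul_nonneg htabs (by linarith : (0:ℝ) ≤ |ξ₁ + ξ₂| - 1 / 8)]
  constructor
  · -- lower bound
    have q1 : 2 * c₁ * |t| ≤ 2 * |w| * |d - t| := by
      nlinarith [mul_nonneg (by linarith : (0:ℝ) ≤ |w| - c₁) htabs,
        mul_nonneg hw0 (by linarith : (0:ℝ) ≤ |d - t| - |t|)]
    nlinarith [mul_nonneg hBabs (by linarith : (0:ℝ) ≤ 8 - |ξ₁ + ξ₂|),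
      mul_le_mul_of_nonneg_left htlow (by positivity : (0:ℝ) ≤ 2 * c₁)]
  · -- upper bound
    have q2 : 2 * |w| * |d - t| ≤ 2 * C₁ * ((1 + C₁) * |t|) := by
      have hdle : |d - t| ≤ (1 + C₁) * |t| := by nlinarith
      have : |w| * |d - t| ≤ C₁ * ((1 + C₁) * |t|) :=
        mul_le_mul hw2 hdle (abs_nonneg _) hC₁.le
      linarith
    nlinarith [mul_nonneg hBabs (by linarith : (0:ℝ) ≤ |ξ₁ + ξ₂| - 1 / 8),
      mul_le_mul_of_nonneg_left hthigh (by positivity : (0:ℝ) ≤ 2 * C₁ * (1 + C₁))]
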